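/- For any Hermitian N×N complex matrix R, the sum of the positive eigenvalues of R equals the minimum of trace(X) over all Hermitian matrices X satisfying X ⪰ 0 and X ⪰ R (i.e., X and X − R are both positive semidefinite). -/

import Mathlib

open Matrix
open scoped ComplexOrder Classical

/-- The sum of the positive eigenvalues of a matrix (defined to be `0` on
non-Hermitian matrices). -/
noncomputable def posEigSum {N : ℕ} (R : Matrix (Fin N) (Fin N) ℂ) : ℝ :=
  if h : R.IsHermitian then ∑ j, max (h.eigenvalues j) 0 else 0

lemma psd_diag_nonneg {N : ℕ} {M : Matrix (Fin N) (Fin N) ℂ} (hM : M.PosSemidef) (i : Fin N) :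
    0 ≤ M i i := by
  have := hM.dotProduct_mulVec_nonneg (Pi.single i 1)
  simpa [dotProduct, mulVec, Pi.single_apply, Finset.sum_ite_eq'] using this

/-- For a Hermitian matrix `R`, the sum of its positive eigenvalues equals the minimum of
`trace X` over all Hermitian `X` with `X ⪰ 0` and `X ⪰ R`. -/
theorem posEigSum_eq_min_trace {N : ℕ} (R : Matrix (Fin N) (Fin N) ℂ)
    (hR : R.IsHermitian) :
    IsLeast {t : ℝ | ∃ X : Matrix (Fin N) (Fin N) ℂ,
        X.PosSemidef ∧ (X - R).PosSemidef ∧ t = (X.trace).re} (posEigSum R) := by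
  set U : Matrix (Fin N) (Fin N) ℂ := (hR.eigenvectorUnitary : Matrix (Fin N) (Fin N) ℂ) with hU
  set ev : Fin N → ℝ := hR.eigenvalues with hev
  have hUU : star U * U = 1 := Matrix.mem_unitaryGroup_iff'.mp hR.eigenvectorUnitary.2
  have hUU' : U * star U = 1 := Matrix.mem_unitaryGroup_iff.mp hR.eigenvectorUnitary.2
  have hspec : R = U * diagonal (RCLike.ofReal ∘ ev) * star U := hR.spectral_theorem
  have key : ∀ D : Matrix (Fin N) (Fin N) ℂ, star U * (U * D * star U) * U = D := by
    intro D
    simp only [Matrix.mul_assoc, hUU, mul_one]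
    rw [← Matrix.mul_assoc, hUU, one_mul]
  rw [posEigSum, dif_pos hR]
  constructor
  · refine ⟨U * diagonal (fun i => ((max (ev i) 0 : ℝ) : ℂ)) * star U, ?_, ?_, ?_⟩
    · exact (posSemidef_diagonal_iff.mpr fun i => by
        simp [Complex.le_def, le_max_right]).mul_mul_conjTranspose_same U
    · have heq : U * diagonal (fun i => ((max (ev i) 0 : ℝ) : ℂ)) * star U - R
          = U * diagonal (fun i => ((max (ev i) 0 - ev i : ℝ) : ℂ)) * star U := by
        rw [hspec, ← sub_mul, ← Matrix.mul_sub]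
        congr 2
        ext i j
        rcases eq_or_ne i j with rfl | h
        · simp
        · simp [diagonal_apply_ne _ h]
      rw [heq]
      exact (posSemidef_diagonal_iff.mpr fun i => by
        simp [Complex.le_def, sub_nonneg, le_max_left]).mul_mul_conjTranspose_same U
    · rw [trace_mul_cycle, hUU, one_mul, trace_diagonal]
      simp
      rfl
  · rintro t ⟨X, hX, hXR, rfl⟩
    set Y := star U * X * U with hY
    have hYpsd : Y.PosSemidef := hX.conjTranspose_mul_mul_same U
    have htr : X.trace = Y.trace := by
      rw [hY, trace_mul_cycle, hUU', one_mul]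
    have hdiff : (Y - diagonal (RCLike.ofReal ∘ ev)).PosSemidef := by
      have heq : star U * (X - R) * U = Y - diagonal (RCLike.ofReal ∘ ev) := by
        rw [Matrix.mul_sub, Matrix.sub_mul, hspec, key]
      rw [← heq]
      exact hXR.conjTranspose_mul_mul_same U
    rw [htr, Matrix.trace]
    simp only [Matrix.diag_apply, Complex.re_sum]
    refine Finset.sum_le_sum fun i _ => ?_
    have h1 : 0 ≤ (Y i i).re := (Complex.le_def.mp (psd_diag_nonneg hYpsd i)).1
    have h2 : ev i ≤ (Y i i).re := by
      have h := (Complex.le_def.mp (psd_diag_nonneg hdiff i)).1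
      simp only [Matrix.sub_apply, Complex.sub_re, diagonal_apply_eq, Function.comp_apply,
        Complex.zero_re, Complex.ofReal_re, RCLike.ofReal_re] at h
      have hre : ((RCLike.ofReal (ev i) : ℂ)).re = ev i := Complex.ofReal_re _
      linarith
    exact max_le h2 h1
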